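/- Let X be a set, let A = X ⊕ X (two disjoint copies of X), and let π : A* → F(X) be the monoid homomorphism to the free group on X sending the first copy of x to x and the second copy of x to x⁻¹. For every word w = a₁⋯aₙ ∈ A* with π(w) = 1, there exists a relation ⌢ ⊆ {1, …, n} × {1, …, n} such that: (1) i ⌢ j implies i < j; (2) every position k ∈ {1, …, n} occurs in exactly one pair of ⌢ (as left or right endpoint, not both); (3) if i₁ ⌢ j₁ and i₂ ⌢ j₂ with i₁ < i₂, then either j₂ < j₁ or j₁ < i₂; (4) whenever i ⌢ j, the letters a_i and a_j map under π to mutually inverse elements of F(X), and the factor a_{i+1}⋯a_{j-1} satisfies π(a_{i+1}⋯a_{j-1}) = 1. -/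

import Mathlib

/-- The canonical monoid homomorphism `A* → F(X)` for the alphabet `A = X ⊕ X`,
sending the first copy of `x` to the generator `x` and the second copy to `x⁻¹`. -/
def freeGroupPi (X : Type) : FreeMonoid (X ⊕ X) →* FreeGroup X :=
  FreeMonoid.lift (Sum.elim (fun x => FreeGroup.of x) fun x => (FreeGroup.of x)⁻¹)

/- ### Auxiliary material -/

def toP {X : Type} : X ⊕ X → X × Bool := Sum.elim (fun x => (x, true)) (fun x => (x, false))
def ofP {X : Type} : X × Bool → X ⊕ X := fun p => if p.2 then Sum.inl p.1 else Sum.inr p.1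

lemma ofP_toP {X : Type} (a : X ⊕ X) : ofP (toP a) = a := by cases a <;> rfl

lemma pi_eq_mk {X : Type} (w : List (X ⊕ X)) :
    freeGroupPi X (FreeMonoid.ofList w) = FreeGroup.mk (w.map toP) := by
  induction w with
  | nil => simp [FreeGroup.one_eq_mk.symm]
  | cons a w ih =>
    have : FreeMonoid.ofList (a :: w) = FreeMonoid.of a * FreeMonoid.ofList w := rfl
    rw [this, map_mul, ih]
    have h1 : freeGroupPi X (FreeMonoid.of a) = FreeGroup.mk [toP a] := by
      cases a <;> simp [freeGroupPi, toP, FreeGroup.of] <;> rfl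
    rw [h1, FreeGroup.mul_mk]
    rfl

lemma pi_pair {X : Type} (x : X) (b : Bool) :
    freeGroupPi X (FreeMonoid.of (ofP (x, b))) *
      freeGroupPi X (FreeMonoid.of (ofP (x, !b))) = 1 := by
  cases b <;> simp [freeGroupPi, ofP]

lemma step_decomp {α : Type*} {L L' : List (α × Bool)} (h : FreeGroup.Red.Step L L') :
    ∃ L1 L2 x b, L = L1 ++ (x, b) :: (x, !b) :: L2 := by
  cases h; exact ⟨_, _, _, _, rfl⟩

lemma exists_cancel {X : Type} (w : List (X ⊕ X)) (hne : w ≠ [])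
    (hw : freeGroupPi X (FreeMonoid.ofList w) = 1) :
    ∃ (s t : List (X ⊕ X)) (a b : X ⊕ X), w = s ++ a :: b :: t ∧
      freeGroupPi X (FreeMonoid.of a) * freeGroupPi X (FreeMonoid.of b) = 1 := by
  rw [pi_eq_mk, FreeGroup.one_eq_mk] at hw
  have hred : FreeGroup.Red (w.map toP) [] := by
    rcases FreeGroup.Red.exact.mp hw with ⟨c, h1, h2⟩
    rcases Relation.ReflTransGen.cases_head h2 with h | ⟨d, hd, -⟩
    · rw [← h] at h1; exact h1
    · have := hd.length; simp at this
  have hmapne : w.map toP ≠ [] := by simpa using hne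
  rcases Relation.ReflTransGen.cases_head hred with h | ⟨c, hstep, -⟩
  · exact absurd h hmapne
  · obtain ⟨L1, L2, x, b, hdec⟩ := step_decomp hstep
    have hw' : w = L1.map ofP ++ ofP (x, b) :: ofP (x, !b) :: L2.map ofP := by
      have : w = (w.map toP).map ofP := by
        rw [List.map_map]
        conv_lhs => rw [← List.map_id w]
        exact (List.map_congr_left fun a _ => (ofP_toP a).symm)
      rw [this, hdec]; simp
    exact ⟨_, _, _, _, hw', pi_pair x b⟩

def piT {X : Type} (l : List (X ⊕ X)) (p : ℕ) : FreeGroup X :=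
  freeGroupPi X (FreeMonoid.ofList (l.take p))

lemma ofList_mul {X : Type} (x y : List (X ⊕ X)) :
    FreeMonoid.ofList (x ++ y) = FreeMonoid.ofList x * FreeMonoid.ofList y := rfl

lemma seg {X : Type} (l : List (X ⊕ X)) (p q : ℕ) (hpq : p ≤ q) :
    freeGroupPi X (FreeMonoid.ofList ((l.drop p).take (q - p))) = (piT l p)⁻¹ * piT l q := by
  have h : l.take q = l.take p ++ (l.drop p).take (q - p) := by
    conv_lhs => rw [show q = p + (q - p) by omega]
    exact List.take_add
  unfold piT
  rw [h, ofList_mul, map_mul]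
  group

lemma pi_get {X : Type} (l : List (X ⊕ X)) (i : Fin l.length) :
    freeGroupPi X (FreeMonoid.of (l.get i)) = (piT l i)⁻¹ * piT l (i + 1) := by
  have h1 : (l.drop i).take 1 = [l.get i] := by
    rw [List.drop_eq_getElem_cons i.2]
    rfl
  have := seg l i (i + 1) (by omega)
  rw [show (i : ℕ) + 1 - i = 1 by omega, h1] at this
  exact this

/-- The index embedding skipping positions `m`, `m+1`. -/
def eN (m k : ℕ) : ℕ := if k < m then k else k + 2

lemma eN_lt_iff {m k l : ℕ} : eN m k < eN m l ↔ k < l := by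
  unfold eN; split <;> split <;> omega

lemma eN_inj {m k l : ℕ} (h : eN m k = eN m l) : k = l := by
  unfold eN at h; split at h <;> split at h <;> omega

lemma eN_ne {m k : ℕ} : eN m k ≠ m ∧ eN m k ≠ m + 1 := by
  unfold eN; split <;> omega

lemma eN_lt {m k L : ℕ} (hk : k < L) (hm : m ≤ L) : eN m k < L + 2 := by
  unfold eN; split <;> omega

lemma eN_eq_of_lt {m k : ℕ} (h : k < m) : eN m k = k := if_pos h

lemma eN_eq_of_ge {m k : ℕ} (h : m ≤ k) : eN m k = k + 2 := if_neg (by omega)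

lemma eN_surj {m p L : ℕ} (hp : p < L + 2) (h1 : p ≠ m) (h2 : p ≠ m + 1) (hm : m ≤ L) :
    ∃ k, k < L ∧ eN m k = p := by
  rcases Nat.lt_or_ge p m with h | h
  · exact ⟨p, by omega, if_pos h⟩
  · exact ⟨p - 2, by omega, by unfold eN; rw [if_neg (by omega)]; omega⟩

lemma main_lemma {X : Type} (n : ℕ) : ∀ w : List (X ⊕ X), w.length = n →
    freeGroupPi X (FreeMonoid.ofList w) = 1 →
    ∃ r : Fin w.length → Fin w.length → Prop,
      (∀ i j, r i j → i < j) ∧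
      (∀ k : Fin w.length,
        ∃! p : Fin w.length × Fin w.length, r p.1 p.2 ∧ (p.1 = k ∨ p.2 = k)) ∧
      (∀ i₁ j₁ i₂ j₂, r i₁ j₁ → r i₂ j₂ → i₁ < i₂ → (j₂ < j₁ ∨ j₁ < i₂)) ∧
      (∀ i j, r i j →
        freeGroupPi X (FreeMonoid.of (w.get i)) =
          (freeGroupPi X (FreeMonoid.of (w.get j)))⁻¹ ∧
        freeGroupPi X (FreeMonoid.ofList
          ((w.drop ((i : ℕ) + 1)).take ((j : ℕ) - (i : ℕ) - 1))) = 1) := by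
  induction n using Nat.strong_induction_on with
  | _ n ih =>
  intro w hn hw
  rcases eq_or_ne w [] with rfl | hne
  · exact ⟨fun _ _ => False, fun _ _ h => h.elim, fun k => k.elim0,
      fun _ _ _ _ h => h.elim, fun _ _ h => h.elim⟩
  obtain ⟨s, t, a, b, hdec, hab⟩ := exists_cancel w hne hw
  set u := s ++ t with hu_def
  set m := s.length with hm_def
  have hlw : w.length = m + t.length + 2 := by
    rw [hdec]; simp only [List.length_append, List.length_cons]; omega
  have hulen : u.length = m + t.length := by
    rw [hu_def]; simp [List.length_append]; omega
  have hL : w.length = u.length + 2 := by omega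
  have hmlen : m ≤ u.length := by omega
  -- π(u) = 1
  have hu1 : freeGroupPi X (FreeMonoid.ofList u) = 1 := by
    have h1 : FreeMonoid.ofList w = FreeMonoid.ofList s *
        (FreeMonoid.of a * (FreeMonoid.of b * FreeMonoid.ofList t)) := by rw [hdec]; rfl
    have h2 : FreeMonoid.ofList u = FreeMonoid.ofList s * FreeMonoid.ofList t := rfl
    rw [h1, map_mul, map_mul, map_mul,
      ← mul_assoc (freeGroupPi X (FreeMonoid.of a)), hab, one_mul] at hw
    rw [h2, map_mul]; exact hw
  obtain ⟨r', h1, h2, h3, h4⟩ := ih u.length (by omega) u rfl hu1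
  -- prefix comparison
  have hf1 : ∀ p, p ≤ m → piT w p = piT u p := by
    intro p hp
    have heq : w.take p = u.take p := by
      rw [hdec, hu_def, List.take_append, List.take_append,
        show p - s.length = 0 by omega]
      simp
    unfold piT; rw [heq]
  have hf2 : ∀ p, m ≤ p → piT w (p + 2) = piT u p := by
    intro p hp
    have hw' : w.take (p + 2) = s ++ a :: b :: t.take (p - m) := by
      rw [hdec, List.take_append,
        List.take_of_length_le (show s.length ≤ p + 2 by omega)]
      congr 1
      rw [show p + 2 - s.length = (p - m) + 2 by omega,
        show p - m + 2 = (p - m + 1) + 1 by omega, List.take_succ_cons, List.take_succ_cons]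
    have hu' : u.take p = s ++ t.take (p - m) := by
      rw [hu_def, List.take_append,
        List.take_of_length_le (show s.length ≤ p by omega)]
    unfold piT
    rw [hw', hu']
    have e1 : FreeMonoid.ofList (s ++ a :: b :: t.take (p - m)) = FreeMonoid.ofList s *
        (FreeMonoid.of a * (FreeMonoid.of b * FreeMonoid.ofList (t.take (p - m)))) := rfl
    have e2 : FreeMonoid.ofList (s ++ t.take (p - m)) =
        FreeMonoid.ofList s * FreeMonoid.ofList (t.take (p - m)) := rfl
    rw [e1, e2, map_mul, map_mul, map_mul, map_mul,
      ← mul_assoc (freeGroupPi X (FreeMonoid.of a)), hab, one_mul]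
  have hfm : piT w m = piT w (m + 2) := by rw [hf1 m le_rfl, hf2 m le_rfl]
  have hfE : ∀ k : Fin u.length, piT w (eN m k) = piT u k := by
    intro k
    rcases Nat.lt_or_ge (k : ℕ) m with h | h
    · rw [eN_eq_of_lt h]; exact hf1 _ (by omega)
    · rw [eN_eq_of_ge h]; exact hf2 _ h
  have hfE1 : ∀ k : Fin u.length, piT w (eN m k + 1) = piT u ((k : ℕ) + 1) := by
    intro k
    rcases Nat.lt_or_ge (k : ℕ) m with h | h
    · rw [eN_eq_of_lt h]; exact hf1 _ (by omega)
    · rw [eN_eq_of_ge h, show (k : ℕ) + 2 + 1 = ((k : ℕ) + 1) + 2 by omega]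
      exact hf2 _ (by omega)
  refine ⟨fun i j => (((i : ℕ) = m ∧ (j : ℕ) = m + 1) ∨
      ∃ i' j' : Fin u.length, r' i' j' ∧ (i : ℕ) = eN m i' ∧ (j : ℕ) = eN m j'),
      ?_, ?_, ?_, ?_⟩
  -- (1)
  · rintro i j (⟨hi, hj⟩ | ⟨i', j', hr, hi, hj⟩)
    · exact Fin.lt_def.mpr (by omega)
    · refine Fin.lt_def.mpr ?_
      rw [hi, hj]
      exact eN_lt_iff.mpr (Fin.lt_def.mp (h1 i' j' hr))
  -- (2)
  · intro k
    by_cases hkm : (k : ℕ) = m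
    · refine ⟨(⟨m, by omega⟩, ⟨m + 1, by omega⟩), ⟨Or.inl ⟨rfl, rfl⟩,
        Or.inl (Fin.ext hkm.symm)⟩, ?_⟩
      rintro ⟨q1, q2⟩ ⟨hqr, hqor⟩
      rcases hqr with ⟨hq1, hq2⟩ | ⟨i₂, j₂, hr₂, hi₂, hj₂⟩
      · rw [Prod.mk.injEq]; exact ⟨Fin.ext hq1, Fin.ext hq2⟩
      · exfalso
        rcases hqor with h | h
        · have hv := congrArg Fin.val h
          have := (eN_ne (m := m) (k := (i₂ : ℕ))).1
          omega
        · have hv := congrArg Fin.val h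
          have := (eN_ne (m := m) (k := (j₂ : ℕ))).1
          omega
    by_cases hkm1 : (k : ℕ) = m + 1
    · refine ⟨(⟨m, by omega⟩, ⟨m + 1, by omega⟩), ⟨Or.inl ⟨rfl, rfl⟩,
        Or.inr (Fin.ext hkm1.symm)⟩, ?_⟩
      rintro ⟨q1, q2⟩ ⟨hqr, hqor⟩
      rcases hqr with ⟨hq1, hq2⟩ | ⟨i₂, j₂, hr₂, hi₂, hj₂⟩
      · rw [Prod.mk.injEq]; exact ⟨Fin.ext hq1, Fin.ext hq2⟩
      · exfalso
        rcases hqor with h | h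
        · have hv := congrArg Fin.val h
          have := (eN_ne (m := m) (k := (i₂ : ℕ))).2
          omega
        · have hv := congrArg Fin.val h
          have := (eN_ne (m := m) (k := (j₂ : ℕ))).2
          omega
    -- k is an embedded position
    obtain ⟨kv, hkv_lt, hkv⟩ := eN_surj (show (k : ℕ) < u.length + 2 by omega) hkm hkm1 hmlen
    obtain ⟨⟨i', j'⟩, ⟨hpr, hpor⟩, hpu⟩ := h2 ⟨kv, hkv_lt⟩
    refine ⟨(⟨eN m i', by rw [hL]; exact eN_lt i'.2 hmlen⟩,
             ⟨eN m j', by rw [hL]; exact eN_lt j'.2 hmlen⟩),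
      ⟨Or.inr ⟨i', j', hpr, rfl, rfl⟩, ?_⟩, ?_⟩
    · rcases hpor with h | h
      · refine Or.inl (Fin.ext ?_)
        have hv := congrArg Fin.val h
        show eN m (i' : ℕ) = (k : ℕ)
        rw [show (i' : ℕ) = kv from hv]; exact hkv
      · refine Or.inr (Fin.ext ?_)
        have hv := congrArg Fin.val h
        show eN m (j' : ℕ) = (k : ℕ)
        rw [show (j' : ℕ) = kv from hv]; exact hkv
    · rintro ⟨q1, q2⟩ ⟨hqr, hqor⟩
      rcases hqr with ⟨hq1, hq2⟩ | ⟨i₂, j₂, hr₂, hi₂, hj₂⟩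
      · exfalso
        rcases hqor with h | h
        · have hv := congrArg Fin.val h; omega
        · have hv := congrArg Fin.val h; omega
      · have key : (i₂, j₂) = (i', j') := by
          rcases hqor with h | h
          · have hv := congrArg Fin.val h
            have : eN m (i₂ : ℕ) = eN m kv := by rw [← hi₂, hv, hkv]
            exact hpu (i₂, j₂) ⟨hr₂, Or.inl (Fin.ext (eN_inj this))⟩
          · have hv := congrArg Fin.val h
            have : eN m (j₂ : ℕ) = eN m kv := by rw [← hj₂, hv, hkv]
            exact hpu (i₂, j₂) ⟨hr₂, Or.inr (Fin.ext (eN_inj this))⟩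
        rw [Prod.mk.injEq] at key ⊢
        refine ⟨Fin.ext ?_, Fin.ext ?_⟩
        · rw [hi₂, show i₂ = i' from key.1]
        · rw [hj₂, show j₂ = j' from key.2]
  -- (3)
  · rintro i₁ j₁ i₂ j₂ (⟨a1, b1⟩ | ⟨i1', j1', hr1, ei1, ej1⟩)
      (⟨a2, b2⟩ | ⟨i2', j2', hr2, ei2, ej2⟩) hlt
    · exact absurd (Fin.lt_def.mp hlt) (by omega)
    · have hv := Fin.lt_def.mp hlt
      have hne2 := eN_ne (m := m) (k := (i2' : ℕ))
      exact Or.inr (Fin.lt_def.mpr (by omega))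
    · have hv := Fin.lt_def.mp hlt
      have hnej := eN_ne (m := m) (k := (j1' : ℕ))
      rcases Nat.lt_or_ge (eN m (j1' : ℕ)) m with h | h
      · exact Or.inr (Fin.lt_def.mpr (by omega))
      · exact Or.inl (Fin.lt_def.mpr (by omega))
    · have hv := Fin.lt_def.mp hlt
      have hlt' : i1' < i2' := Fin.lt_def.mpr
        (eN_lt_iff.mp (show eN m (i1' : ℕ) < eN m (i2' : ℕ) by omega))
      rcases h3 i1' j1' i2' j2' hr1 hr2 hlt' with h | h
      · exact Or.inl (Fin.lt_def.mpr (by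
          rw [ej1, ej2]; exact eN_lt_iff.mpr (Fin.lt_def.mp h)))
      · refine Or.inr (Fin.lt_def.mpr ?_)
        rw [ej1, ei2]
        exact eN_lt_iff.mpr (Fin.lt_def.mp h)
  -- (4)
  · rintro i j (⟨hi, hj⟩ | ⟨i', j', hr, hi, hj⟩)
    · constructor
      · have key : freeGroupPi X (FreeMonoid.of (w.get i)) *
            freeGroupPi X (FreeMonoid.of (w.get j)) = 1 := by
          rw [pi_get w i, pi_get w j, hi, hj,
            show m + 1 + 1 = m + 2 by omega, ← hfm]
          group
        exact eq_inv_of_mul_eq_one_left key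
      · rw [hi, hj, show m + 1 - m - 1 = 0 by omega, List.take_zero]
        simp
    · have hij' : (i' : ℕ) < (j' : ℕ) := Fin.lt_def.mp (h1 i' j' hr)
      have h4' := h4 i' j' hr
      have hsegu : piT u (j' : ℕ) = piT u ((i' : ℕ) + 1) := by
        have hs := seg u ((i' : ℕ) + 1) (j' : ℕ) (by omega)
        rw [show (j' : ℕ) - ((i' : ℕ) + 1) = (j' : ℕ) - (i' : ℕ) - 1 by omega,
          h4'.2] at hs
        have h5 : (piT u ((i' : ℕ) + 1))⁻¹ * piT u (j' : ℕ) = 1 := hs.symm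
        exact (inv_mul_eq_one.mp h5).symm
      constructor
      · have hl := h4'.1
        rw [pi_get u i', pi_get u j'] at hl
        rw [pi_get w i, pi_get w j, hi, hj, hfE i', hfE1 i', hfE j', hfE1 j']
        exact hl
      · rw [hi, hj]
        have hlt2 : eN m (i' : ℕ) < eN m (j' : ℕ) := eN_lt_iff.mpr hij'
        have hs := seg w (eN m (i' : ℕ) + 1) (eN m (j' : ℕ)) (by omega)
        rw [show eN m (j' : ℕ) - eN m (i' : ℕ) - 1 =
          eN m (j' : ℕ) - (eN m (i' : ℕ) + 1) by omega, hs, hfE1 i', hfE j', hsegu]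
        group

theorem stmt_10 {X : Type} (w : List (X ⊕ X))
    (hw : freeGroupPi X (FreeMonoid.ofList w) = 1) :
    ∃ r : Fin w.length → Fin w.length → Prop,
      -- (1) matching edges go forward
      (∀ i j, r i j → i < j) ∧
      -- (2) every position occurs in exactly one matched pair
      (∀ k : Fin w.length,
        ∃! p : Fin w.length × Fin w.length, r p.1 p.2 ∧ (p.1 = k ∨ p.2 = k)) ∧
      -- (3) nesting (non-crossing) property
      (∀ i₁ j₁ i₂ j₂, r i₁ j₁ → r i₂ j₂ → i₁ < i₂ → (j₂ < j₁ ∨ j₁ < i₂)) ∧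
      -- (4) matched letters are mutually inverse and the enclosed factor is trivial
      (∀ i j, r i j →
        freeGroupPi X (FreeMonoid.of (w.get i)) =
          (freeGroupPi X (FreeMonoid.of (w.get j)))⁻¹ ∧
        freeGroupPi X (FreeMonoid.ofList
          ((w.drop ((i : ℕ) + 1)).take ((j : ℕ) - (i : ℕ) - 1))) = 1) := by
  exact main_lemma w.length w rfl hw
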